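/- Let R be an integral domain with quotient field Q. (a) If m ∈ w-Max(R) and the localization R_m is a discrete valuation ring, then the R_m-module Q/R_m is faithfully injective, and for every nonzero ideal I of R the Matlis evaluation map θ : R_m/I_m → Hom_{R_m}(Hom_{R_m}(R_m/I_m, Q/R_m), Q/R_m), a ↦ (φ ↦ φ(a)), is injective. (b) If R_m is a discrete valuation ring for every m ∈ w-Max(R), then E^(w) := ∏_{m ∈ w-Max(R)} (Q/R_m) is a w-universal injective R-module, i.e., E^(w) is an injective R-module and Hom_R(A, E^(w)) ≠ 0 for every nonzero GV-torsion-free R-module A. -/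

import Mathlib

universe u v

section WDefs

variable (R : Type u) [CommRing R]

/-- The canonical `R`-linear map `R → Hom_R(J, R)`, `r ↦ (j ↦ r * j)`. -/
def gvCanonicalMap (J : Ideal R) : R →ₗ[R] (J →ₗ[R] R) where
  toFun r := r • (J.subtype)
  map_add' x y := add_smul x y _
  map_smul' r x := by simp [mul_smul]

/-- A finitely generated ideal `J` of `R` is a GV-ideal (Glaz–Vasconcelos ideal)
if the canonical map `R → Hom_R(J, R)` is an isomorphism. -/
def IsGVIdeal (J : Ideal R) : Prop :=
  J.FG ∧ Function.Bijective (gvCanonicalMap R J)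

/-- An ideal `I` of `R` is a w-ideal if whenever `J x ⊆ I` for some GV-ideal `J`,
then `x ∈ I`. -/
def IsWIdeal (I : Ideal R) : Prop :=
  ∀ x : R, (∃ J : Ideal R, IsGVIdeal R J ∧ ∀ j ∈ J, j * x ∈ I) → x ∈ I

/-- `m` is a maximal w-ideal: maximal among the proper w-ideals of `R`. -/
def IsMaxWIdeal (m : Ideal R) : Prop :=
  IsWIdeal R m ∧ m ≠ ⊤ ∧ ∀ I : Ideal R, IsWIdeal R I → I ≠ ⊤ → m ≤ I → I = m

variable {M : Type v} [AddCommGroup M] [Module R M]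

/-- `x` is a GV-torsion element if it is killed by some GV-ideal. -/
def IsGVTorsionElem (x : M) : Prop :=
  ∃ J : Ideal R, IsGVIdeal R J ∧ ∀ j ∈ J, j • x = 0

variable (M)

/-- `M` is GV-torsion-free if it has no nonzero GV-torsion element. -/
def IsGVTorsionFree : Prop := ∀ x : M, IsGVTorsionElem R x → x = 0

/-- `M` is GV-torsion if all its elements are GV-torsion. -/
def IsGVTorsion : Prop := ∀ x : M, IsGVTorsionElem R x

/-- `M` is a w-module: GV-torsion-free and every map from a GV-ideal to `M`
extends to `R`. -/
def IsWModule : Prop :=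
  IsGVTorsionFree R M ∧
    ∀ J : Ideal R, IsGVIdeal R J → ∀ f : J →ₗ[R] M,
      ∃ g : R →ₗ[R] M, ∀ x : J, g (x : R) = f x

end WDefs

/-- The image of `R_m` in the quotient field, as an `R_m`-submodule of `Frac(R)`. -/
noncomputable abbrev locImageSubmodule (R : Type u) [CommRing R] [IsDomain R]
    (m : Ideal R) [hp : m.IsPrime] :
    Submodule (Localization.AtPrime m) (FractionRing R) :=
  LinearMap.range (Algebra.linearMap (Localization.AtPrime m) (FractionRing R))

/-- `Q/R_m` viewed as an `R`-module (for forming the product `E^(w)`). -/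
noncomputable abbrev QmodLocR (R : Type u) [CommRing R] [IsDomain R]
    (m : Ideal R) (hp : m.IsPrime) : Type u :=
  letI := hp
  (FractionRing R) ⧸ ((locImageSubmodule R m).restrictScalars R)

/-- The set of maximal w-ideals (each of which is prime). -/
def WMaxPrimes (R : Type u) [CommRing R] : Type u :=
  {m : Ideal R // IsMaxWIdeal R m ∧ m.IsPrime}

section Aux

namespace WUnivAux

/-! ### Generic w-ideal machinery -/

section WMachinery

variable {R : Type u} [CommRing R]

/-- The union (sSup) of a nonempty chain of w-ideals is a w-ideal, and the chain has an
upper bound inside the set of proper w-ideals. -/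
lemma chain_finset_bound {c : Set (Ideal R)} (hchain : IsChain (· ≤ ·) c) {y : Ideal R}
    (hy : y ∈ c) (T : Finset R) (g : R → R) (h : ∀ t ∈ T, g t ∈ sSup c) :
    ∃ I ∈ c, ∀ t ∈ T, g t ∈ I := by
  classical
  induction T using Finset.induction_on with
  | empty => exact ⟨y, hy, by simp⟩
  | @insert a T' ha ih =>
    obtain ⟨I₁, hI₁c, hI₁⟩ := ih (fun t ht => h t (Finset.mem_insert_of_mem ht))
    have hga : g a ∈ sSup c := h a (Finset.mem_insert_self a T')
    rw [Submodule.mem_sSup_of_directed ⟨y, hy⟩ hchain.directedOn] at hga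
    obtain ⟨I₂, hI₂c, hI₂⟩ := hga
    rcases hchain.total hI₁c hI₂c with hle | hle
    · exact ⟨I₂, hI₂c, fun t ht => by
        rcases Finset.mem_insert.mp ht with rfl | ht
        · exact hI₂
        · exact hle (hI₁ t ht)⟩
    · exact ⟨I₁, hI₁c, fun t ht => by
        rcases Finset.mem_insert.mp ht with rfl | ht
        · exact hle hI₂
        · exact hI₁ t ht⟩

/-- Every proper w-ideal is contained in a maximal w-ideal (Zorn). -/
lemma exists_maxWIdeal (K : Ideal R) (hKw : IsWIdeal R K) (hK : K ≠ ⊤) :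
    ∃ m : Ideal R, IsMaxWIdeal R m ∧ K ≤ m := by
  obtain ⟨M, hKM, hM⟩ := zorn_le_nonempty₀ {I : Ideal R | IsWIdeal R I ∧ I ≠ ⊤}
    (fun c hcs hchain y hyc => by
      refine ⟨sSup c, ⟨?_, ?_⟩, fun z hz => le_sSup hz⟩
      · rintro z ⟨J, hJ, hall⟩
        obtain ⟨T, hT⟩ := hJ.1
        obtain ⟨I, hIc, hTI⟩ := chain_finset_bound hchain hyc T (fun t => t * z)
          (fun t ht => hall t (hT ▸ Submodule.subset_span ht))
        have hallI : ∀ j ∈ J, j * z ∈ I := by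
          intro j hj
          rw [← hT] at hj
          induction hj using Submodule.span_induction with
          | mem t ht => exact hTI t ht
          | zero => simpa using I.zero_mem
          | add u v hu hv hu' hv' => rw [add_mul]; exact I.add_mem hu' hv'
          | smul r u hu hu' =>
            rw [smul_eq_mul, mul_assoc]
            exact I.mul_mem_left r hu'
        exact le_sSup hIc ((hcs hIc).1 z ⟨J, hJ, hallI⟩)
      · intro htop
        have h1 : (1 : R) ∈ sSup c := htop ▸ Submodule.mem_top
        rw [Submodule.mem_sSup_of_directed ⟨y, hyc⟩ hchain.directedOn] at h1
        obtain ⟨I, hIc, hI⟩ := h1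
        exact (hcs hIc).2 ((Ideal.eq_top_iff_one I).mpr hI))
    K ⟨hKw, hK⟩
  exact ⟨M, ⟨hM.prop.1, hM.prop.2,
    fun I hIw hIne hle => le_antisymm (hM.2 ⟨hIw, hIne⟩ hle) hle⟩, hKM⟩

/-- A maximal w-ideal is prime. -/
lemma maxWIdeal_isPrime {m : Ideal R} (h : IsMaxWIdeal R m) : m.IsPrime := by
  refine ⟨h.2.1, ?_⟩
  intro a b hab
  by_contra hcon
  push_neg at hcon
  obtain ⟨ha, hb⟩ := hcon
  set Ib : Ideal R :=
    { carrier := {r : R | r * b ∈ m}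
      add_mem' := fun hx hy => by
        simp only [Set.mem_setOf_eq] at *
        rw [add_mul]; exact m.add_mem hx hy
      zero_mem' := by simp
      smul_mem' := fun c x hx => by
        simp only [Set.mem_setOf_eq, smul_eq_mul] at *
        rw [mul_assoc]; exact m.mul_mem_left c hx } with hIb
  have hIbw : IsWIdeal R Ib := by
    intro y ⟨J, hJ, hall⟩
    show y * b ∈ m
    refine h.1 (y * b) ⟨J, hJ, fun j hj => ?_⟩
    have := hall j hj
    show j * (y * b) ∈ m
    rw [← mul_assoc]
    exact this
  have hIbne : Ib ≠ ⊤ := by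
    intro htop
    have h1 : (1 : R) ∈ Ib := htop ▸ Submodule.mem_top
    have h2 : (1 : R) * b ∈ m := h1
    rw [one_mul] at h2
    exact hb h2
  have hmIb : m ≤ Ib := fun r hr => m.mul_mem_right b hr
  have : Ib = m := h.2.2 Ib hIbw hIbne hmIb
  exact ha (this ▸ (hab : a ∈ Ib))

/-- The annihilator of an element of a GV-torsion-free module is a w-ideal. -/
lemma ann_isWIdeal {A : Type v} [AddCommGroup A] [Module R A]
    (hA : IsGVTorsionFree R A) (x : A) :
    IsWIdeal R (LinearMap.ker (LinearMap.toSpanSingleton R A x)) := by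
  intro y ⟨J, hJ, hall⟩
  rw [LinearMap.mem_ker, LinearMap.toSpanSingleton_apply]
  refine hA (y • x) ⟨J, hJ, fun j hj => ?_⟩
  have := hall j hj
  rw [LinearMap.mem_ker, LinearMap.toSpanSingleton_apply] at this
  rw [smul_smul]
  exact this

end WMachinery

/-! ### Localization helpers -/

section Loc

variable {R : Type u} [CommRing R] [IsDomain R] (m : Ideal R) [hp : m.IsPrime]

local notation "Rm" => Localization.AtPrime m
local notation "Q" => FractionRing R

lemma algMapRmQ_inj : Function.Injective (algebraMap Rm Q) :=
  IsFractionRing.injective _ _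

lemma algMapRRm_inj : Function.Injective (algebraMap R Rm) := by
  have h : Function.Injective (algebraMap R Q) := IsFractionRing.injective _ _
  rw [IsScalarTower.algebraMap_eq R Rm Q, RingHom.coe_comp] at h
  exact Function.Injective.of_comp h

/-- The `R_m`-module `Q/R_m`. -/
local notation "E" => (Q ⧸ locImageSubmodule R m)

/-- The `R`-module `Q/R_m`. -/
local notation "E'" => ((FractionRing R) ⧸ (Submodule.restrictScalars R (locImageSubmodule R m)))

lemma mk_eq_zero_iff (q : Q) :
    (Submodule.Quotient.mk q : E) = 0 ↔ ∃ y : Rm, algebraMap Rm Q y = q := by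
  rw [Submodule.Quotient.mk_eq_zero]
  exact LinearMap.mem_range

lemma mk_eq_zero_iff' (q : Q) :
    (Submodule.Quotient.mk q : E') = 0 ↔ ∃ y : Rm, algebraMap Rm Q y = q := by
  rw [Submodule.Quotient.mk_eq_zero]
  show _ ∈ (locImageSubmodule R m).restrictScalars R ↔ _
  rw [Submodule.restrictScalars_mem]
  exact LinearMap.mem_range

lemma smul_surj_E (c : Rm) (hc : c ≠ 0) :
    Function.Surjective (fun e : E => c • e) := by
  intro e
  obtain ⟨q, rfl⟩ := Submodule.Quotient.mk_surjective _ e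
  have hcQ : algebraMap Rm Q c ≠ 0 := fun h => hc (algMapRmQ_inj m (by rw [h, map_zero]))
  refine ⟨Submodule.Quotient.mk ((algebraMap Rm Q c)⁻¹ * q), ?_⟩
  show c • Submodule.Quotient.mk _ = _
  rw [← Submodule.Quotient.mk_smul]
  congr 1
  rw [Algebra.smul_def, ← mul_assoc, mul_inv_cancel₀ hcQ, one_mul]

lemma smul_surj_E' (a : R) (ha : a ≠ 0) :
    Function.Surjective (fun e : E' => a • e) := by
  intro e
  obtain ⟨q, rfl⟩ := Submodule.Quotient.mk_surjective _ e
  have haQ : algebraMap R Q a ≠ 0 := fun h =>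
    ha ((IsFractionRing.injective R Q) (by rw [h, map_zero]))
  refine ⟨Submodule.Quotient.mk ((algebraMap R Q a)⁻¹ * q), ?_⟩
  show a • Submodule.Quotient.mk _ = _
  rw [← Submodule.Quotient.mk_smul]
  congr 1
  rw [Algebra.smul_def, ← mul_assoc, mul_inv_cancel₀ haQ, one_mul]

lemma primeCompl_smul_cancel {u : R} (hu : u ∈ m.primeCompl) :
    Function.Injective (fun e : E' => u • e) := by
  have key : ∀ e : E', u • e = 0 → e = 0 := by
    intro e he
    obtain ⟨q, rfl⟩ := Submodule.Quotient.mk_surjective _ e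
    rw [← Submodule.Quotient.mk_smul] at he
    rw [mk_eq_zero_iff'] at he
    obtain ⟨y, hy⟩ := he
    have hw : IsUnit (algebraMap R Rm u) := IsLocalization.map_units Rm (⟨u, hu⟩ : m.primeCompl)
    rw [mk_eq_zero_iff']
    refine ⟨↑hw.unit⁻¹ * y, ?_⟩
    rw [map_mul, hy, Algebra.smul_def, IsScalarTower.algebraMap_apply R Rm Q u,
      ← mul_assoc, ← map_mul, IsUnit.val_inv_mul, map_one, one_mul]
  intro e₁ e₂ h
  have : u • (e₁ - e₂) = 0 := by
    rw [smul_sub]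
    simpa [sub_eq_zero] using h
  have := key _ this
  rwa [sub_eq_zero] at this

/-! ### Baer criteria -/

lemma baer_Rm [IsDiscreteValuationRing Rm] : Module.Baer Rm E := by
  intro I g
  obtain ⟨c, hcspan⟩ := (IsPrincipalIdealRing.principal I).principal
  subst hcspan
  by_cases h0 : c = 0
  · refine ⟨0, fun x hx => ?_⟩
    subst h0
    have hx0 : x = 0 := by
      simpa [Ideal.span_singleton_eq_bot.mpr rfl] using hx
    rw [show (⟨x, hx⟩ : Submodule.span Rm ({0} : Set Rm)) = 0 from Subtype.ext hx0,
      map_zero]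
    simp
  · have hcmem : c ∈ Ideal.span {c} := Ideal.mem_span_singleton_self c
    obtain ⟨z, hz⟩ := smul_surj_E m c h0 (g ⟨c, hcmem⟩)
    refine ⟨LinearMap.toSpanSingleton Rm E z, fun x hx => ?_⟩
    obtain ⟨t, ht⟩ := Ideal.mem_span_singleton'.mp hx
    have hsub : (⟨x, hx⟩ : Ideal.span {c}) = t • ⟨c, hcmem⟩ :=
      Subtype.ext (by simp [← ht, smul_eq_mul])
    have hz' : c • z = g ⟨c, hcmem⟩ := hz
    rw [LinearMap.toSpanSingleton_apply, hsub, map_smul, ← hz', ← ht, mul_smul]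

lemma baer_R [IsDiscreteValuationRing Rm] : Module.Baer R E' := by
  intro I f
  by_cases hI : I = ⊥
  · refine ⟨0, fun x hx => ?_⟩
    subst hI
    have hx0 : x = 0 := hx
    rw [show (⟨x, hx⟩ : (⊥ : Ideal R)) = 0 from Subtype.ext hx0, map_zero]
    simp
  · set Ie := I.map (algebraMap R Rm) with hIe
    obtain ⟨c, hcspan⟩ := (IsPrincipalIdealRing.principal Ie).principal
    have hc0 : c ≠ 0 := by
      rintro rfl
      apply hI
      rw [Submodule.eq_bot_iff]
      intro a haI
      have h1 : algebraMap R Rm a ∈ Ie := Ideal.mem_map_of_mem _ haI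
      rw [hcspan, Ideal.submodule_span_eq, Ideal.span_singleton_eq_bot.mpr rfl,
        Ideal.mem_bot] at h1
      exact algMapRRm_inj m (by rw [h1, map_zero])
    have hc_mem : c ∈ Ie := hcspan ▸ Ideal.mem_span_singleton_self c
    obtain ⟨⟨a, s⟩, has⟩ :=
      (IsLocalization.mem_map_algebraMap_iff (M := m.primeCompl) (S := Rm)).mp hc_mem
    -- has : c * algebraMap R Rm ↑s = algebraMap R Rm ↑a
    have ha0 : (a : R) ≠ 0 := by
      intro h
      apply hc0
      have hs : algebraMap R Rm (s : R) ≠ 0 := by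
        intro hs0
        have := IsLocalization.map_units Rm s
        rw [hs0] at this
        exact this.ne_zero rfl
      have : c * algebraMap R Rm (s : R) = 0 := by rw [has, h, map_zero]
      exact (mul_eq_zero.mp this).resolve_right hs
    obtain ⟨z, hz⟩ := smul_surj_E' m (a : R) ha0 (f ⟨(a : R), a.2⟩)
    refine ⟨LinearMap.toSpanSingleton R E' z, fun b hb => ?_⟩
    rw [LinearMap.toSpanSingleton_apply]
    have hbe : algebraMap R Rm b ∈ Ie := Ideal.mem_map_of_mem _ hb
    rw [hcspan] at hbe
    obtain ⟨t, ht⟩ := Ideal.mem_span_singleton'.mp hbe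
    obtain ⟨⟨r, s'⟩, hrs : IsLocalization.mk' Rm r s' = t⟩ := IsLocalization.mk'_surjective m.primeCompl t
    have key : b * ((s' : R) * (s : R)) = r * (a : R) := by
      apply algMapRRm_inj m
      rw [map_mul, map_mul, map_mul, ← ht, ← hrs, ← has]
      rw [show IsLocalization.mk' (Localization.AtPrime m) r s' * c *
            (algebraMap R Rm (s' : R) * algebraMap R Rm (s : R)) =
          (IsLocalization.mk' (Localization.AtPrime m) r s' * algebraMap R Rm (s' : R)) *
            (c * algebraMap R Rm (s : R)) from by ring]
      rw [IsLocalization.mk'_spec]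
    have hmem1 : r * (a : R) ∈ I := I.mul_mem_left r a.2
    have hmem2 : b * ((s' : R) * (s : R)) ∈ I := I.mul_mem_right _ hb
    have hfs : ∀ (u : R) (y : R) (hy : y ∈ I) (h2 : u * y ∈ I),
        f ⟨u * y, h2⟩ = u • f ⟨y, hy⟩ := by
      intro u y hy h2
      have he : (⟨u * y, h2⟩ : I) = u • ⟨y, hy⟩ := Subtype.ext (smul_eq_mul (a := u) (b := y)).symm
      rw [he, map_smul]
    apply primeCompl_smul_cancel m (m.primeCompl.mul_mem s'.2 s.2)
    show ((s' : R) * (s : R)) • (b • z) = ((s' : R) * (s : R)) • f ⟨b, hb⟩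
    calc ((s' : R) * (s : R)) • (b • z)
        = (b * ((s' : R) * (s : R))) • z := by rw [← mul_smul, mul_comm]
      _ = (r * (a : R)) • z := by rw [key]
      _ = r • ((a : R) • z) := by rw [mul_smul]
      _ = r • f ⟨(a : R), a.2⟩ := by rw [show (a : R) • z = f ⟨(a : R), a.2⟩ from hz]
      _ = f ⟨r * (a : R), hmem1⟩ := (hfs r (a : R) a.2 hmem1).symm
      _ = f ⟨b * ((s' : R) * (s : R)), hmem2⟩ := by congr 1; exact Subtype.ext key.symm
      _ = ((s' : R) * (s : R)) • f ⟨b, hb⟩ := by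
          have hmem3 : ((s' : R) * (s : R)) * b ∈ I := by rwa [mul_comm]
          rw [show (⟨b * ((s' : R) * (s : R)), hmem2⟩ : I) =
            ⟨((s' : R) * (s : R)) * b, hmem3⟩ from Subtype.ext (mul_comm _ _)]
          exact hfs _ b hb hmem3

lemma baer_pi {R : Type u} [CommRing R] {ι : Type u} (Efam : ι → Type u)
    [∀ i, AddCommGroup (Efam i)] [∀ i, Module R (Efam i)]
    (h : ∀ i, Module.Baer R (Efam i)) : Module.Baer R (∀ i, Efam i) := by
  intro I f
  choose g hg using fun i => h i I ((LinearMap.proj i) ∘ₗ f)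
  exact ⟨LinearMap.pi g, fun x hx => funext fun i => hg i x hx⟩

/-! ### Separation lemmas -/

lemma sep_Rm [IsDiscreteValuationRing Rm] (N : Type v) [AddCommGroup N] [Module Rm N]
    (x : N) (hx : x ≠ 0) : ∃ φ : N →ₗ[Rm] E, φ x ≠ 0 := by
  obtain ⟨ϖ, hϖ⟩ := IsDiscreteValuationRing.exists_irreducible Rm
  have hπ0 : ϖ ≠ 0 := hϖ.ne_zero
  have hπQ : algebraMap Rm Q ϖ ≠ 0 := fun h => hπ0 (algMapRmQ_inj m (by rw [h, map_zero]))
  set e0 : E := Submodule.Quotient.mk ((algebraMap Rm Q ϖ)⁻¹) with he0def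
  have he0 : e0 ≠ 0 := by
    intro h
    rw [he0def, mk_eq_zero_iff] at h
    obtain ⟨y, hy⟩ := h
    apply hϖ.not_isUnit
    have h1 : algebraMap Rm Q (ϖ * y) = algebraMap Rm Q 1 := by
      rw [map_mul, hy, mul_inv_cancel₀ hπQ, map_one]
    exact IsUnit.of_mul_eq_one y (algMapRmQ_inj m h1)
  have hker : LinearMap.ker (LinearMap.toSpanSingleton Rm N x) ≤
      LinearMap.ker (LinearMap.toSpanSingleton Rm E e0) := by
    intro r hr
    rw [LinearMap.mem_ker, LinearMap.toSpanSingleton_apply] at hr ⊢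
    have hrm : r ∈ IsLocalRing.maximalIdeal Rm := by
      rw [IsLocalRing.mem_maximalIdeal, mem_nonunits_iff]
      intro hu
      apply hx
      have hinv : (↑hu.unit⁻¹ : Rm) • (r • x) = x := by
        rw [smul_smul, IsUnit.val_inv_mul, one_smul]
      rw [← hinv, hr, smul_zero]
    rw [(IsDiscreteValuationRing.irreducible_iff_uniformizer ϖ).mp hϖ] at hrm
    obtain ⟨t, ht⟩ := Ideal.mem_span_singleton'.mp hrm
    rw [he0def, ← Submodule.Quotient.mk_smul, mk_eq_zero_iff]
    refine ⟨t, ?_⟩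
    rw [← ht, Algebra.smul_def, map_mul, mul_assoc, mul_inv_cancel₀ hπQ, mul_one]
  set φ0 := LinearMap.toSpanSingleton Rm N x with hφ0
  set φ1 : LinearMap.range φ0 →ₗ[Rm] E :=
    (Submodule.liftQ _ (LinearMap.toSpanSingleton Rm E e0) hker) ∘ₗ
      (φ0.quotKerEquivRange).symm.toLinearMap with hφ1
  obtain ⟨φ, hφ⟩ := (baer_Rm m).extension_property (LinearMap.range φ0).subtype
    Subtype.val_injective φ1
  have hxmem : x ∈ LinearMap.range φ0 := ⟨1, by simp [hφ0]⟩
  refine ⟨φ, ?_⟩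
  have h1 : φ x = φ1 ⟨x, hxmem⟩ := DFunLike.congr_fun hφ ⟨x, hxmem⟩
  have h2 : φ1 ⟨x, hxmem⟩ = e0 := by
    have heq : (φ0.quotKerEquivRange) (Submodule.Quotient.mk 1) = ⟨x, hxmem⟩ :=
      Subtype.ext (by rw [LinearMap.quotKerEquivRange_apply_mk]; simp [hφ0])
    rw [hφ1, LinearMap.comp_apply, LinearEquiv.coe_toLinearMap, ← heq,
      LinearEquiv.symm_apply_apply, Submodule.liftQ_apply,
      LinearMap.toSpanSingleton_apply, one_smul]
  rw [h1, h2]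
  exact he0

lemma sep_R [IsDiscreteValuationRing Rm] (A : Type v) [AddCommGroup A] [Module R A]
    (x : A) (hx : x ≠ 0) (hann : ∀ r : R, r • x = 0 → r ∈ m) :
    ∃ φ : A →ₗ[R] E', φ x ≠ 0 := by
  obtain ⟨ϖ, hϖ⟩ := IsDiscreteValuationRing.exists_irreducible Rm
  have hπ0 : ϖ ≠ 0 := hϖ.ne_zero
  have hπQ : algebraMap Rm Q ϖ ≠ 0 := fun h => hπ0 (algMapRmQ_inj m (by rw [h, map_zero]))
  set e0 : E' := Submodule.Quotient.mk ((algebraMap Rm Q ϖ)⁻¹) with he0def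
  have he0 : e0 ≠ 0 := by
    intro h
    rw [he0def, mk_eq_zero_iff'] at h
    obtain ⟨y, hy⟩ := h
    apply hϖ.not_isUnit
    have h1 : algebraMap Rm Q (ϖ * y) = algebraMap Rm Q 1 := by
      rw [map_mul, hy, mul_inv_cancel₀ hπQ, map_one]
    exact IsUnit.of_mul_eq_one y (algMapRmQ_inj m h1)
  have hker : LinearMap.ker (LinearMap.toSpanSingleton R A x) ≤
      LinearMap.ker (LinearMap.toSpanSingleton R E' e0) := by
    intro r hr
    rw [LinearMap.mem_ker, LinearMap.toSpanSingleton_apply] at hr ⊢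
    have hrm : algebraMap R Rm r ∈ IsLocalRing.maximalIdeal Rm :=
      (IsLocalization.AtPrime.to_map_mem_maximal_iff Rm m r).mpr (hann r hr)
    rw [(IsDiscreteValuationRing.irreducible_iff_uniformizer ϖ).mp hϖ] at hrm
    obtain ⟨t, ht⟩ := Ideal.mem_span_singleton'.mp hrm
    rw [he0def, ← Submodule.Quotient.mk_smul, mk_eq_zero_iff']
    refine ⟨t, ?_⟩
    rw [Algebra.smul_def, IsScalarTower.algebraMap_apply R Rm Q r, ← ht, map_mul,
      mul_assoc, mul_inv_cancel₀ hπQ, mul_one]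
  set φ0 := LinearMap.toSpanSingleton R A x with hφ0
  set φ1 : LinearMap.range φ0 →ₗ[R] E' :=
    (Submodule.liftQ _ (LinearMap.toSpanSingleton R E' e0) hker) ∘ₗ
      (φ0.quotKerEquivRange).symm.toLinearMap with hφ1
  obtain ⟨φ, hφ⟩ := (baer_R m).extension_property (LinearMap.range φ0).subtype
    Subtype.val_injective φ1
  have hxmem : x ∈ LinearMap.range φ0 := ⟨1, by simp [hφ0]⟩
  refine ⟨φ, ?_⟩
  have h1 : φ x = φ1 ⟨x, hxmem⟩ := DFunLike.congr_fun hφ ⟨x, hxmem⟩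
  have h2 : φ1 ⟨x, hxmem⟩ = e0 := by
    have heq : (φ0.quotKerEquivRange) (Submodule.Quotient.mk 1) = ⟨x, hxmem⟩ :=
      Subtype.ext (by rw [LinearMap.quotKerEquivRange_apply_mk]; simp [hφ0])
    rw [hφ1, LinearMap.comp_apply, LinearEquiv.coe_toLinearMap, ← heq,
      LinearEquiv.symm_apply_apply, Submodule.liftQ_apply,
      LinearMap.toSpanSingleton_apply, one_smul]
  rw [h1, h2]
  exact he0

end Loc

end WUnivAux

end Aux

/-- Let `R` be a domain with quotient field `Q`.
(a) If `m` is a maximal w-ideal with `R_m` a DVR, then `Q/R_m` is a faithfully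
injective `R_m`-module, and for every nonzero ideal `I` of `R` the Matlis evaluation
map `θ : R_m/I_m → Hom(Hom(R_m/I_m, Q/R_m), Q/R_m)` is injective.
(b) If `R_m` is a DVR for every maximal w-ideal `m`, then
`E^(w) = ∏_{m ∈ w-Max(R)} Q/R_m` is a w-universal injective `R`-module. -/
theorem dvr_localizations_give_wUniversal_injective (R : Type u) [CommRing R]
    [IsDomain R] :
    (∀ (m : Ideal R), IsMaxWIdeal R m → ∀ [hp : m.IsPrime],
      IsDiscreteValuationRing (Localization.AtPrime m) →
        ((Module.Injective (Localization.AtPrime m)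
            ((FractionRing R) ⧸ locImageSubmodule R m) ∧
          ∀ (N : Type u) [AddCommGroup N] [Module (Localization.AtPrime m) N],
            Nontrivial N →
              ∃ f : N →ₗ[Localization.AtPrime m]
                  ((FractionRing R) ⧸ locImageSubmodule R m), f ≠ 0) ∧
          ∀ I : Ideal R, I ≠ ⊥ →
            Function.Injective
              (fun (a : (Localization.AtPrime m) ⧸
                    I.map (algebraMap R (Localization.AtPrime m))) =>
                fun (φ : ((Localization.AtPrime m) ⧸
                      I.map (algebraMap R (Localization.AtPrime m)))
                    →ₗ[Localization.AtPrime m]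
                      ((FractionRing R) ⧸ locImageSubmodule R m)) => φ a))) ∧
    ((∀ (m : Ideal R), IsMaxWIdeal R m → ∀ [hp : m.IsPrime],
        IsDiscreteValuationRing (Localization.AtPrime m)) →
      Module.Injective R ((m : WMaxPrimes R) → QmodLocR R m.1 m.2.2) ∧
        ∀ (A : Type u) [AddCommGroup A] [Module R A], IsGVTorsionFree R A →
          Nontrivial A →
            ∃ f : A →ₗ[R] ((m : WMaxPrimes R) → QmodLocR R m.1 m.2.2), f ≠ 0) := by
  classical
  constructor
  · intro m hmax hp hdvr
    refine ⟨⟨(WUnivAux.baer_Rm m).injective, ?_⟩, ?_⟩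
    · intro N _ _ hN
      obtain ⟨x, hx⟩ := exists_ne (0 : N)
      obtain ⟨φ, hφ⟩ := WUnivAux.sep_Rm m N x hx
      exact ⟨φ, fun h => hφ (by rw [h]; rfl)⟩
    · intro I _hI a b hab
      by_contra hne
      obtain ⟨φ, hφ⟩ := WUnivAux.sep_Rm m _ (a - b) (sub_ne_zero.mpr hne)
      apply hφ
      have hfb : φ a = φ b := congrFun hab φ
      rw [map_sub, hfb, sub_self]
  · intro hdvr
    constructor
    · refine (WUnivAux.baer_pi _ ?_).injective
      intro mm
      haveI : mm.1.IsPrime := mm.2.2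
      haveI := hdvr mm.1 mm.2.1
      exact WUnivAux.baer_R mm.1
    · intro A _ _ hGV hA
      obtain ⟨x, hx⟩ := exists_ne (0 : A)
      set K := LinearMap.ker (LinearMap.toSpanSingleton R A x) with hK
      have hKw : IsWIdeal R K := WUnivAux.ann_isWIdeal hGV x
      have hKne : K ≠ ⊤ := by
        intro htop
        apply hx
        have h1 : (1 : R) ∈ K := htop ▸ Submodule.mem_top
        rw [hK, LinearMap.mem_ker, LinearMap.toSpanSingleton_apply, one_smul] at h1
        exact h1
      obtain ⟨m, hmax, hKm⟩ := WUnivAux.exists_maxWIdeal K hKw hKne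
      have hprime : m.IsPrime := WUnivAux.maxWIdeal_isPrime hmax
      haveI := hprime
      haveI : IsDiscreteValuationRing (Localization.AtPrime m) := hdvr m hmax
      obtain ⟨φ, hφ⟩ := WUnivAux.sep_R m A x hx (fun r hr => hKm (by
        rw [hK, LinearMap.mem_ker, LinearMap.toSpanSingleton_apply]; exact hr))
      refine ⟨(LinearMap.single R (fun mm : WMaxPrimes R => QmodLocR R mm.1 mm.2.2)
        (⟨m, hmax, hprime⟩ : WMaxPrimes R)).comp φ, ?_⟩
      intro h
      apply hφ
      have h2 := congrArg (fun g : A →ₗ[R] ((mm : WMaxPrimes R) → QmodLocR R mm.1 mm.2.2) =>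
        g x (⟨m, hmax, hprime⟩ : WMaxPrimes R)) h
      have h3 : (LinearMap.single R (fun mm : WMaxPrimes R => QmodLocR R mm.1 mm.2.2)
          (⟨m, hmax, hprime⟩ : WMaxPrimes R)) (φ x) (⟨m, hmax, hprime⟩ : WMaxPrimes R) = φ x :=
        Pi.single_eq_same (M := fun mm : WMaxPrimes R => QmodLocR R mm.1 mm.2.2)
          (⟨m, hmax, hprime⟩ : WMaxPrimes R) (φ x)
      exact h3.symm.trans h2
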